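/- In the setting of the generalized reciprocal convexity lemma: let t_k < t and let τ ≥ (t - t_{k-p+1}) where t_{k-p+1} < t_{k-p+2} < … < t_k < t. Then τ [ (1/(t - t_k)) δ_0' R δ_0 + ∑_{ν=1}^{p-1} (1/(t_{k-ν+1} - t_{k-ν})) δ_ν' R δ_ν + (1/(t_{k-p+1} - t + τ)) δ_p' R δ_p ] ≥ δ' Ψ δ, provided all denominators are positive. -/

import Mathlib

open Matrix Finset

private lemma blockQuad {n : ℕ} (R G : Matrix (Fin n) (Fin n) ℝ)
    (hblock : (Matrix.fromBlocks R G Gᵀ R).PosSemidef) (x y : Fin n → ℝ) :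
    0 ≤ x ⬝ᵥ R *ᵥ x + y ⬝ᵥ R *ᵥ y + 2 * (x ⬝ᵥ G *ᵥ y) := by
  have h := hblock.dotProduct_mulVec_nonneg (Sum.elim x y)
  simp only [star_trivial, Matrix.fromBlocks_mulVec, sumElim_dotProduct_sumElim,
    dotProduct_add, Sum.elim_comp_inl, Sum.elim_comp_inr] at h
  have hyx : y ⬝ᵥ Gᵀ *ᵥ x = x ⬝ᵥ G *ᵥ y := by
    rw [Matrix.mulVec_transpose, dotProduct_comm, Matrix.dotProduct_mulVec]
  linarith

private lemma pairBound {n : ℕ} (R G : Matrix (Fin n) (Fin n) ℝ)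
    (hblock : (Matrix.fromBlocks R G Gᵀ R).PosSemidef) (x y : Fin n → ℝ) (a b : ℝ) :
    2 * a * b * (x ⬝ᵥ ((1/2 : ℝ) • (G + Gᵀ)) *ᵥ y)
      ≤ a^2 * (x ⬝ᵥ R *ᵥ x) + b^2 * (y ⬝ᵥ R *ᵥ y) := by
  have h1 := blockQuad R G hblock (a • x) (-(b • y))
  have h2 := blockQuad R G hblock (b • y) (-(a • x))
  simp only [Matrix.mulVec_smul, Matrix.mulVec_neg, dotProduct_neg, dotProduct_smul,
    smul_dotProduct, neg_dotProduct, smul_eq_mul, smul_neg, Matrix.mulVec_neg] at h1 h2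
  have hyx : y ⬝ᵥ Gᵀ *ᵥ x = x ⬝ᵥ G *ᵥ y := by
    rw [Matrix.mulVec_transpose, dotProduct_comm, Matrix.dotProduct_mulVec]
  have hxgy : x ⬝ᵥ Gᵀ *ᵥ y = y ⬝ᵥ G *ᵥ x := by
    rw [Matrix.mulVec_transpose, dotProduct_comm, Matrix.dotProduct_mulVec]
  have hhat : x ⬝ᵥ ((1/2 : ℝ) • (G + Gᵀ)) *ᵥ y
      = (1/2) * (x ⬝ᵥ G *ᵥ y + y ⬝ᵥ G *ᵥ x) := by
    simp [Matrix.add_mulVec, Matrix.smul_mulVec, dotProduct_add, hxgy, mul_add]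
  rw [hhat]
  nlinarith [h1, h2]

private lemma coreBound (N : ℕ) (q : ℕ → ℝ) (c : ℕ → ℕ → ℝ) (α : ℕ → ℝ)
    (hα : ∀ i ∈ Finset.range N, 0 < α i)
    (hsum : ∑ i ∈ Finset.range N, α i = 1)
    (hc : ∀ i ∈ Finset.range N, ∀ j ∈ Finset.range N,
      2 * c i j ≤ (α j / α i) * q i + (α i / α j) * q j) :
    ∑ i ∈ Finset.range N, ∑ j ∈ Finset.range N, (if i = j then q i else c i j)
      ≤ ∑ i ∈ Finset.range N, (1 / α i) * q i := by
  have step1 : ∑ i ∈ Finset.range N, ∑ j ∈ Finset.range N, (if i = j then q i else c i j)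
      ≤ ∑ i ∈ Finset.range N, ∑ j ∈ Finset.range N,
        (1/2) * ((α j / α i) * q i + (α i / α j) * q j) := by
    refine Finset.sum_le_sum fun i hi => Finset.sum_le_sum fun j hj => ?_
    by_cases h : i = j
    · subst h
      simp only [if_pos rfl]
      have : α i / α i = 1 := div_self (hα i hi).ne'
      rw [this]; ring_nf; simp
    · rw [if_neg h]
      linarith [hc i hi j hj]
  refine step1.trans (le_of_eq ?_)
  have swap : ∑ i ∈ Finset.range N, ∑ j ∈ Finset.range N, (α i / α j) * q j
      = ∑ i ∈ Finset.range N, ∑ j ∈ Finset.range N, (α j / α i) * q i :=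
    Finset.sum_comm
  have expand : ∀ i ∈ Finset.range N,
      ∑ j ∈ Finset.range N, (α j / α i) * q i = (1 / α i) * q i := by
    intro i hi
    rw [← Finset.sum_mul]
    have : ∑ j ∈ Finset.range N, α j / α i = 1 / α i := by
      rw [← Finset.sum_div, hsum]
    rw [this]
  calc ∑ i ∈ Finset.range N, ∑ j ∈ Finset.range N,
        (1/2) * ((α j / α i) * q i + (α i / α j) * q j)
      = (1/2) * (∑ i ∈ Finset.range N, ∑ j ∈ Finset.range N, (α j / α i) * q i
          + ∑ i ∈ Finset.range N, ∑ j ∈ Finset.range N, (α i / α j) * q j) := by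
        rw [← Finset.sum_add_distrib]
        rw [Finset.mul_sum]
        refine Finset.sum_congr rfl fun i _ => ?_
        rw [← Finset.sum_add_distrib, Finset.mul_sum]
    _ = ∑ i ∈ Finset.range N, ∑ j ∈ Finset.range N, (α j / α i) * q i := by
        rw [swap]; ring
    _ = ∑ i ∈ Finset.range N, (1 / α i) * q i := Finset.sum_congr rfl expand

/-- Lemma 2 of the paper: bound on the reciprocally weighted quadratic forms
arising from partitioning the delay interval. Here `g m` denotes `t_{k-m}`
for `m = 0, …, p-1`, so `g 0 = t_k` and `g (p-1) = t_{k-p+1}`. -/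
theorem delay_partition_reciprocal_bound {n p : ℕ} (hp : 0 < p)
    (R G : Matrix (Fin n) (Fin n) ℝ) (hRsymm : R.IsSymm) (hRpsd : R.PosSemidef)
    (hblock : (Matrix.fromBlocks R G Gᵀ R).PosSemidef)
    (t τ : ℝ) (g : ℕ → ℝ)
    (hdec : ∀ m, m + 1 < p → g (m + 1) < g m)
    (ht : g 0 < t) (hτ : t - g (p - 1) ≤ τ)
    (hlast : 0 < g (p - 1) - t + τ)
    (δ : ℕ → (Fin n → ℝ)) :
    (fun q : Fin (p + 1) × Fin n => δ q.1.val q.2) ⬝ᵥ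
        (fun (q r : Fin (p + 1) × Fin n) =>
          if q.1 = r.1 then R q.2 r.2
          else ((1 / 2 : ℝ) • (G + Gᵀ)) q.2 r.2 :
          Matrix (Fin (p + 1) × Fin n) (Fin (p + 1) × Fin n) ℝ) *ᵥ
        (fun q : Fin (p + 1) × Fin n => δ q.1.val q.2)
      ≤ τ * ((1 / (t - g 0)) * (δ 0 ⬝ᵥ R *ᵥ δ 0)
          + ∑ ν ∈ Finset.Ico 1 p,
              (1 / (g (ν - 1) - g ν)) * (δ ν ⬝ᵥ R *ᵥ δ ν)
          + (1 / (g (p - 1) - t + τ)) * (δ p ⬝ᵥ R *ᵥ δ p)) := by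
  set H : Matrix (Fin n) (Fin n) ℝ := (1/2 : ℝ) • (G + Gᵀ) with hH
  set Q : ℕ → ℝ := fun i => δ i ⬝ᵥ R *ᵥ δ i with hQ
  set C : ℕ → ℕ → ℝ := fun i j => δ i ⬝ᵥ H *ᵥ δ j with hCdef
  set w : ℕ → ℝ := fun ν =>
    if ν = 0 then t - g 0 else if ν = p then g (p-1) - t + τ else g (ν-1) - g ν with hwdef
  -- weights positive
  have hwpos : ∀ ν ∈ Finset.range (p+1), 0 < w ν := by
    intro ν hν
    simp only [Finset.mem_range] at hν
    by_cases h0 : ν = 0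
    · simp only [hwdef, h0, if_pos rfl]; linarith
    · by_cases hpp : ν = p
      · have hne : p ≠ 0 := hp.ne'
        subst hpp
        simp only [hwdef, if_neg hne, if_pos rfl, if_true, eq_self_iff_true]
        linarith
      · have h1 : 1 ≤ ν := by omega
        have h2 : ν < p := by omega
        have := hdec (ν - 1) (by omega)
        have hν1 : ν - 1 + 1 = ν := by omega
        rw [hν1] at this
        simp only [hwdef, if_neg h0, if_neg hpp]
        linarith
  -- weights sum to τ
  have hwsum : ∑ ν ∈ Finset.range (p+1), w ν = τ := by
    have h0 : ∑ ν ∈ Finset.range (p+1), w ν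
        = w 0 + (∑ ν ∈ Finset.Ico 1 p, w ν) + w p := by
      rw [Finset.sum_range_succ, Finset.range_eq_Ico,
        Finset.sum_eq_sum_Ico_succ_bot hp]
    have h1 : ∑ ν ∈ Finset.Ico 1 p, w ν = g 0 - g (p-1) := by
      rw [Finset.sum_Ico_eq_sum_range]
      have : ∀ i ∈ Finset.range (p-1), w (1+i) = g i - g (i+1) := by
        intro i hi
        simp only [Finset.mem_range] at hi
        have h1' : 1 + i ≠ 0 := by omega
        have h2' : 1 + i ≠ p := by omega
        simp only [hwdef, if_neg h1', if_neg h2']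
        congr 2 <;> omega
      rw [Finset.sum_congr rfl this, Finset.sum_range_sub' g]
    have hw0 : w 0 = t - g 0 := by
      have : (0:ℕ) ≠ p := hp.ne
      simp [hwdef]
    have hwp : w p = g (p-1) - t + τ := by
      simp [hwdef, hp.ne']
    rw [h0, h1, hw0, hwp]; ring
  have hτpos : 0 < τ := by
    rw [← hwsum]
    exact Finset.sum_pos hwpos ⟨0, Finset.mem_range.2 (by omega)⟩
  set α : ℕ → ℝ := fun ν => w ν / τ with hαdef
  have hαpos : ∀ ν ∈ Finset.range (p+1), 0 < α ν :=
    fun ν hν => div_pos (hwpos ν hν) hτpos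
  have hαsum : ∑ ν ∈ Finset.range (p+1), α ν = 1 := by
    simp only [hαdef]
    rw [← Finset.sum_div, hwsum, div_self hτpos.ne']
  -- pairwise bound
  have hC : ∀ i ∈ Finset.range (p+1), ∀ j ∈ Finset.range (p+1),
      2 * C i j ≤ (α j / α i) * Q i + (α i / α j) * Q j := by
    intro i hi j hj
    have hai := hαpos i hi
    have haj := hαpos j hj
    set a : ℝ := Real.sqrt (α j / α i) with ha
    set b : ℝ := Real.sqrt (α i / α j) with hb
    have ha2 : a^2 = α j / α i := Real.sq_sqrt (div_pos haj hai).le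
    have hb2 : b^2 = α i / α j := Real.sq_sqrt (div_pos hai haj).le
    have hab : a * b = 1 := by
      rw [ha, hb, ← Real.sqrt_mul (div_pos haj hai).le]
      rw [show (α j / α i) * (α i / α j) = 1 by field_simp]
      exact Real.sqrt_one
    have hpb := pairBound R G hblock (δ i) (δ j) a b
    rw [ha2, hb2] at hpb
    calc 2 * C i j = 2 * a * b * (δ i ⬝ᵥ H *ᵥ δ j) := by
          rw [hCdef]; rw [show 2 * a * b = 2 * (a * b) by ring, hab]; ring
      _ ≤ (α j / α i) * Q i + (α i / α j) * Q j := hpb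
  -- LHS as a double sum
  have hLHS : (fun q : Fin (p + 1) × Fin n => δ q.1.val q.2) ⬝ᵥ
        (fun (q r : Fin (p + 1) × Fin n) =>
          if q.1 = r.1 then R q.2 r.2 else H q.2 r.2 :
          Matrix (Fin (p + 1) × Fin n) (Fin (p + 1) × Fin n) ℝ) *ᵥ
        (fun q : Fin (p + 1) × Fin n => δ q.1.val q.2)
      = ∑ i ∈ Finset.range (p+1), ∑ j ∈ Finset.range (p+1),
        (if i = j then Q i else C i j) := by
    have hfin : ∑ i ∈ Finset.range (p+1), ∑ j ∈ Finset.range (p+1),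
          (if i = j then Q i else C i j)
        = ∑ i : Fin (p+1), ∑ j : Fin (p+1),
          (if i.val = j.val then Q i.val else C i.val j.val) := by
      rw [← Fin.sum_univ_eq_sum_range]
      exact Finset.sum_congr rfl fun i _ => (Fin.sum_univ_eq_sum_range _ _).symm
    rw [hfin]
    simp only [dotProduct, mulVec, Fintype.sum_prod_type]
    refine Finset.sum_congr rfl fun i _ => ?_
    have hms : ∀ a : Fin n, δ i.val a * ∑ j : Fin (p+1), ∑ b : Fin n,
          (if i = j then R a b else H a b) * δ j.val b
        = ∑ j : Fin (p+1), δ i.val a * ∑ b : Fin n,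
          (if i = j then R a b else H a b) * δ j.val b := fun a => Finset.mul_sum _ _ _
    simp only [hms]
    rw [Finset.sum_comm]
    refine Finset.sum_congr rfl fun j _ => ?_
    by_cases h : i = j
    · subst h
      simp [Fin.ext_iff, hQ, dotProduct, mulVec]
    · have h' : ¬ i.val = j.val := fun hv => h (Fin.ext hv)
      simp only [if_neg h, if_neg h', hCdef, dotProduct, mulVec]
  -- RHS as a single sum
  have hRHS : τ * ((1 / (t - g 0)) * Q 0
          + ∑ ν ∈ Finset.Ico 1 p, (1 / (g (ν - 1) - g ν)) * Q ν
          + (1 / (g (p - 1) - t + τ)) * Q p)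
      = ∑ ν ∈ Finset.range (p+1), (1 / α ν) * Q ν := by
    have h0 : ∑ ν ∈ Finset.range (p+1), (1 / α ν) * Q ν
        = (1 / α 0) * Q 0 + (∑ ν ∈ Finset.Ico 1 p, (1 / α ν) * Q ν)
          + (1 / α p) * Q p := by
      rw [Finset.sum_range_succ, Finset.range_eq_Ico,
        Finset.sum_eq_sum_Ico_succ_bot hp]
    rw [h0]
    have hinv : ∀ ν, 1 / α ν = τ / w ν := fun ν => by
      rw [hαdef, one_div_div]
    have hw0 : w 0 = t - g 0 := by
      have : (0:ℕ) ≠ p := hp.ne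
      simp [hwdef]
    have hwp : w p = g (p-1) - t + τ := by simp [hwdef, hp.ne']
    have hIco : ∑ ν ∈ Finset.Ico 1 p, (1 / α ν) * Q ν
        = ∑ ν ∈ Finset.Ico 1 p, τ * ((1 / (g (ν - 1) - g ν)) * Q ν) := by
      refine Finset.sum_congr rfl fun ν hν => ?_
      simp only [Finset.mem_Ico] at hν
      have h1' : ν ≠ 0 := by omega
      have h2' : ν ≠ p := by omega
      rw [hinv, hwdef]
      simp only [if_neg h1', if_neg h2']
      rw [div_eq_mul_one_div]
      ring
    rw [hIco, hinv, hinv, hw0, hwp, ← Finset.mul_sum]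
    rw [div_eq_mul_one_div τ, div_eq_mul_one_div τ]
    ring
  rw [hLHS]
  have hcore := coreBound (p+1) Q C α hαpos hαsum hC
  rw [← hRHS] at hcore
  exact hcore
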